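/- Let R be a commutative ring, m an odd positive integer, and a_0, ..., a_{m-1} ∈ R with a_i = a_{m-i} for 1 ≤ i ≤ m-1. Then there exists v ∈ R such that det C(a_0,...,a_{m-1}) = (Σ_{i=0}^{m-1} a_i) * v^2, where C is the m×m circulant matrix with (i,j)-entry a_{i-j mod m}. -/

import Mathlib

set_option maxHeartbeats 1000000
open Matrix Finset
namespace CircOdd
variable {F : Type*} [Field F]

section RDefs
variable {R' : Type*} [CommRing R'] (m k : ℕ) (a : ZMod m → R')

def AbarN (t j : ℕ) : R' :=
  a ((t : ZMod m) - (j : ZMod m)) + a ((t : ZMod m) + (j : ZMod m)) - 2 * a (j : ZMod m)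

def BbarN (t j : ℕ) : R' :=
  a ((t : ZMod m) - (j : ZMod m)) - a ((t : ZMod m) + (j : ZMod m))

def Amat : Matrix (Fin k) (Fin k) R' := fun i j => AbarN m a ((i:ℕ)+1) ((j:ℕ)+1)

def Bmat : Matrix (Fin k) (Fin k) R' := fun i j => BbarN m a ((i:ℕ)+1) ((j:ℕ)+1)

end RDefs
set_option linter.unusedSectionVars false
set_option linter.unreachableTactic false
set_option linter.unusedTactic false
section K
variable (k : ℕ)

variable {F : Type*} [Field F] (k : ℕ)

def sval (i t : ℕ) : F :=
  (if t = i+1 then 1 else 0) - (if i = t+1 then 1 else 0) + (if i = k ∧ t = k then 1 else 0)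

lemma sum_sval_mul (f : ℕ → F) (i : ℕ) (h1 : 1 ≤ i) (h2 : i ≤ k) :
    ∑ t ∈ range k, sval k i (t+1) * f (t+1)
      = (if i < k then f (i+1) else 0) - (if 2 ≤ i then f (i-1) else 0)
        + (if i = k then f k else 0) := by
  have step : ∀ t ∈ range k, sval k i (t+1) * f (t+1)
      = (if t = i then f (t+1) else 0) - (if 2 ≤ i ∧ t = i-2 then f (t+1) else 0)
        + (if i = k ∧ t = k-1 then f (t+1) else 0) := by
    intro t ht
    simp only [sval]
    have e1 : (t+1 = i+1) = (t = i) := by simp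
    have e2 : (i = t+1+1) = (2 ≤ i ∧ t = i-2) := by
      apply propext; constructor
      · intro h; omega
      · intro h; omega
    have e3 : (i = k ∧ t+1 = k) = (i = k ∧ t = k-1) := by
      simp only [mem_range] at ht
      apply propext; constructor <;> (intro h; omega)
    simp only [e1, e2, e3]
    split_ifs <;> ring
  rw [Finset.sum_congr rfl step, Finset.sum_add_distrib, Finset.sum_sub_distrib]
  congr 1
  · congr 1
    · rw [Finset.sum_ite_eq' (range k) i (fun t => f (t+1))]
      simp only [mem_range]
    · by_cases h : 2 ≤ i
      · have : ∀ t ∈ range k, (if 2 ≤ i ∧ t = i-2 then f (t+1) else 0)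
            = (if t = i-2 then f (t+1) else 0) := by intro t _; simp [h]
        rw [Finset.sum_congr rfl this, Finset.sum_ite_eq' (range k) (i-2) (fun t => f (t+1))]
        simp only [mem_range]
        rw [if_pos (show _ < k by omega), if_pos h]
        congr 1; omega
      · simp only [h, false_and, if_false, Finset.sum_const_zero]
  · by_cases h : i = k
    · have : ∀ t ∈ range k, (if i = k ∧ t = k-1 then f (t+1) else 0)
          = (if t = k-1 then f (t+1) else 0) := by intro t _; simp [h]
      rw [Finset.sum_congr rfl this, Finset.sum_ite_eq' (range k) (k-1) (fun t => f (t+1))]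
      simp only [mem_range]
      rw [if_pos (show _ < k by omega), if_pos h]
      congr 1; omega
    · simp only [h, false_and, if_false, Finset.sum_const_zero]

lemma sum_mul_sval (f : ℕ → F) (j : ℕ) (h1 : 1 ≤ j) (h2 : j ≤ k) :
    ∑ t ∈ range k, f (t+1) * sval k (t+1) j
      = (if 2 ≤ j then f (j-1) else 0) - (if j < k then f (j+1) else 0)
        + (if j = k then f k else 0) := by
  have step : ∀ t ∈ range k, f (t+1) * sval k (t+1) j
      = (if 2 ≤ j ∧ t = j-2 then f (t+1) else 0) - (if t = j then f (t+1) else 0)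
        + (if j = k ∧ t = k-1 then f (t+1) else 0) := by
    intro t ht
    simp only [sval, mem_range] at *
    have e1 : (j = t+1+1) = (2 ≤ j ∧ t = j-2) := by
      apply propext; constructor <;> (intro h; omega)
    have e2 : (t+1 = j+1) = (t = j) := by simp
    have e3 : (t+1 = k ∧ j = k) = (j = k ∧ t = k-1) := by
      apply propext; constructor <;> (intro h; omega)
    simp only [e1, e2, e3]
    split_ifs <;> ring
  rw [Finset.sum_congr rfl step, Finset.sum_add_distrib, Finset.sum_sub_distrib]
  congr 1
  · congr 1
    · by_cases h : 2 ≤ j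
      · have : ∀ t ∈ range k, (if 2 ≤ j ∧ t = j-2 then f (t+1) else 0)
            = (if t = j-2 then f (t+1) else 0) := by intro t _; simp [h]
        rw [Finset.sum_congr rfl this, Finset.sum_ite_eq' (range k) (j-2) (fun t => f (t+1))]
        simp only [mem_range]
        rw [if_pos (show _ < k by omega), if_pos h]
        congr 1; omega
      · simp only [h, false_and, if_false, Finset.sum_const_zero]
    · rw [Finset.sum_ite_eq' (range k) j (fun t => f (t+1))]
      simp only [mem_range]
  · by_cases h : j = k
    · have : ∀ t ∈ range k, (if j = k ∧ t = k-1 then f (t+1) else 0)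
          = (if t = k-1 then f (t+1) else 0) := by intro t _; simp [h]
      rw [Finset.sum_congr rfl this, Finset.sum_ite_eq' (range k) (k-1) (fun t => f (t+1))]
      simp only [mem_range]
      rw [if_pos (show _ < k by omega), if_pos h]
      congr 1; omega
    · simp only [h, false_and, if_false, Finset.sum_const_zero]


end K


def s'val (t j : ℕ) : F :=
  (if Odd j ∧ j ≤ t then 1 else 0) + (if Odd t ∧ t < j then (-1 : F)^(j-t) else 0)

lemma s'val_zero (J : ℕ) (hJ : 1 ≤ J) : s'val (F := F) 0 J = 0 := by
  simp only [s'val]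
  rw [if_neg (by omega), if_neg (by simp [Nat.odd_iff])]
  ring

lemma subA (I J : ℕ) (hI : 1 ≤ I) (hJ : 1 ≤ J) :
    s'val (F := F) (I+1) J - s'val (I-1) J = if I = J then (1:F) else 0 := by
  rcases Nat.lt_trichotomy J I with h | h | h
  · rw [if_neg (by omega)]
    simp only [s'val, Nat.odd_iff]
    split_ifs <;> first | ring1 | (exfalso; omega)
  · subst h
    rw [if_pos rfl]
    simp only [s'val]
    rw [show J - (J-1) = 1 by omega, pow_one]
    simp only [Nat.odd_iff]
    split_ifs <;> first | ring1 | (exfalso; omega)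
  · rcases Nat.lt_or_ge I (J - 1) with h2 | h2
    · -- J > I + 1
      rw [if_neg (by omega)]
      simp only [s'val]
      rw [show J - (I-1) = (J-(I+1))+2 by omega, pow_add]
      simp only [Nat.odd_iff]
      split_ifs <;> first | ring1 | (exfalso; omega)
    · -- J = I + 1
      have hJI : J = I + 1 := by omega
      subst hJI
      rw [if_neg (by omega)]
      simp only [s'val]
      rw [show I+1 - (I-1) = 2 by omega]
      simp only [Nat.odd_iff]
      split_ifs <;> first | ring1 | (exfalso; omega)

lemma subB (k J : ℕ) (hk : 1 ≤ k) (hJ : 1 ≤ J) (hJk : J ≤ k) :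
    s'val (F := F) k J - s'val (k-1) J = if k = J then (1:F) else 0 := by
  rcases Nat.lt_or_ge J k with h | h
  · rw [if_neg (by omega)]
    simp only [s'val, Nat.odd_iff]
    split_ifs <;> first | ring1 | (exfalso; omega)
  · have : J = k := by omega
    subst this
    rw [if_pos rfl]
    simp only [s'val]
    rw [show J - (J-1) = 1 by omega, pow_one]
    simp only [Nat.odd_iff]
    split_ifs <;> first | ring1 | (exfalso; omega)

lemma key2 (k I J : ℕ) (hI1 : 1 ≤ I) (hIk : I ≤ k) (hJ1 : 1 ≤ J) (hJk : J ≤ k) :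
    (if I < k then s'val (I+1) J else 0) - (if 2 ≤ I then s'val (I-1) J else 0)
      + (if I = k then s'val k J else 0) = (if I = J then (1:F) else 0) := by
  have h0 : (if 2 ≤ I then s'val (F := F) (I-1) J else 0) = s'val (I-1) J := by
    by_cases h : 2 ≤ I
    · rw [if_pos h]
    · rw [if_neg h, show I - 1 = 0 by omega, s'val_zero _ hJ1]
  rw [h0]
  by_cases hIk' : I = k
  · subst hIk'
    rw [if_neg (lt_irrefl I), if_pos rfl, zero_sub, neg_add_eq_sub]
    exact subB I J (by omega) hJ1 hJk
  · rw [if_pos (by omega), if_neg hIk', add_zero]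
    exact subA I J hI1 hJ1



section ZModPart
variable (m k : ℕ) (a : ZMod m → F)


variable [NeZero m] (hs : ∀ i : ZMod m, a (-i) = a i)

set_option linter.unusedSectionVars false

lemma BbarN_zero (I : ℕ) : BbarN m a I 0 = 0 := by
  simp only [BbarN, Nat.cast_zero, sub_zero, add_zero]
  ring1

lemma cast_succ_k (hmk : m = 2*k+1) : ((k+1 : ℕ) : ZMod m) = -((k : ℕ) : ZMod m) := by
  apply eq_neg_of_add_eq_zero_left
  rw [← Nat.cast_add, show k+1+k = m by omega]
  exact ZMod.natCast_self m

lemma core1 (x y : ZMod m) :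
    (a (x+1 - y) + a (x+1+y) - 2*a y) - (a (x-1-y) + a (x-1+y) - 2*a y)
      = (a (x - (y-1)) - a (x + (y-1))) - (a (x - (y+1)) - a (x + (y+1))) := by
  rw [show x+1-y = x - (y-1) by ring, show x-1+y = x + (y-1) by ring,
    show x-1-y = x - (y+1) by ring, show x+1+y = x + (y+1) by ring]
  ring

lemma AB_step (I J : ℕ) (hI : 1 ≤ I) (hJ : 1 ≤ J) :
    AbarN m a (I+1) J - AbarN m a (I-1) J = BbarN m a I (J-1) - BbarN m a I (J+1) := by
  simp only [AbarN, BbarN, Nat.cast_sub hI, Nat.cast_sub hJ, Nat.cast_add, Nat.cast_one]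
  exact core1 m a (I : ZMod m) (J : ZMod m)

include hs

lemma AbarN_zero (J : ℕ) : AbarN m a 0 J = 0 := by
  simp only [AbarN, Nat.cast_zero, zero_sub, zero_add, hs]
  ring

lemma AbarN_succ_k (hmk : m = 2*k+1) (J : ℕ) : AbarN m a (k+1) J = AbarN m a k J := by
  simp only [AbarN, cast_succ_k m k hmk]
  rw [show -((k:ℕ) : ZMod m) - (J : ZMod m) = -(((k:ℕ):ZMod m) + J) by ring, hs,
    show -((k:ℕ) : ZMod m) + (J : ZMod m) = -(((k:ℕ):ZMod m) - J) by ring, hs]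
  ring

lemma BbarN_succ_k (hmk : m = 2*k+1) (I : ℕ) : BbarN m a I (k+1) = - BbarN m a I k := by
  simp only [BbarN, cast_succ_k m k hmk]
  rw [show ((I:ℕ) : ZMod m) - -((k:ℕ):ZMod m) = (I:ZMod m) + k by ring,
    show ((I:ℕ) : ZMod m) + -((k:ℕ):ZMod m) = (I:ZMod m) - k by ring]
  ring

lemma key1 (hmk : m = 2*k+1) (I J : ℕ) (hI1 : 1 ≤ I) (hIk : I ≤ k) (hJ1 : 1 ≤ J)
    (hJk : J ≤ k) :
    (if I < k then AbarN m a (I+1) J else 0) - (if 2 ≤ I then AbarN m a (I-1) J else 0)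
      + (if I = k then AbarN m a k J else 0)
    = (if 2 ≤ J then BbarN m a I (J-1) else 0) - (if J < k then BbarN m a I (J+1) else 0)
      + (if J = k then BbarN m a I k else 0) := by
  have hL : (if I < k then AbarN m a (I+1) J else 0) - (if 2 ≤ I then AbarN m a (I-1) J else 0)
      + (if I = k then AbarN m a k J else 0) = AbarN m a (I+1) J - AbarN m a (I-1) J := by
    have h2 : (if 2 ≤ I then AbarN m a (I-1) J else 0) = AbarN m a (I-1) J := by
      by_cases h : 2 ≤ I
      · rw [if_pos h]
      · rw [if_neg h, show I - 1 = 0 by omega, AbarN_zero m a hs J]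
    rw [h2]
    by_cases h : I = k
    · rw [if_neg (by omega), if_pos h, h, AbarN_succ_k m k a hs hmk J]
      ring
    · rw [if_pos (by omega), if_neg h, add_zero]
  have hR : (if 2 ≤ J then BbarN m a I (J-1) else 0) - (if J < k then BbarN m a I (J+1) else 0)
      + (if J = k then BbarN m a I k else 0) = BbarN m a I (J-1) - BbarN m a I (J+1) := by
    have h2 : (if 2 ≤ J then BbarN m a I (J-1) else 0) = BbarN m a I (J-1) := by
      by_cases h : 2 ≤ J
      · rw [if_pos h]
      · rw [if_neg h, show J - 1 = 0 by omega, BbarN_zero m a I]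
    rw [h2]
    by_cases h : J = k
    · rw [if_neg (by omega), if_pos h, h, BbarN_succ_k m k a hs hmk I]
      ring
    · rw [if_pos (by omega), if_neg h, add_zero]
  rw [hL, hR, AB_step m a I J hI1 hJ1]

end ZModPart

section Mats

variable (m k : ℕ) (a : ZMod m → F)

def Smat : Matrix (Fin k) (Fin k) F := fun i t => sval k ((i:ℕ)+1) ((t:ℕ)+1)
def S'mat : Matrix (Fin k) (Fin k) F := fun t j => s'val ((t:ℕ)+1) ((j:ℕ)+1)

lemma Smat_mul_S'mat : (Smat k : Matrix (Fin k) (Fin k) F) * S'mat k = 1 := by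
  ext i j
  rw [Matrix.mul_apply, Matrix.one_apply]
  simp only [Smat, S'mat]
  rw [Fin.sum_univ_eq_sum_range (fun t => sval k ((i:ℕ)+1) (t+1) * s'val (t+1) ((j:ℕ)+1)) k]
  rw [sum_sval_mul k (fun t => s'val t ((j:ℕ)+1)) ((i:ℕ)+1) (by omega) (by omega),
    key2 k ((i:ℕ)+1) ((j:ℕ)+1) (by omega) (by omega) (by omega) (by omega)]
  by_cases h : i = j
  · rw [if_pos (by rw [h]), if_pos h]
  · rw [if_neg (by simpa [Fin.ext_iff] using h), if_neg h]

variable [NeZero m] (hs : ∀ i : ZMod m, a (-i) = a i)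

include hs

lemma Smat_mul_Amat (hmk : m = 2*k+1) :
    Smat k * Amat m k a = Bmat m k a * Smat k := by
  ext i j
  rw [Matrix.mul_apply, Matrix.mul_apply]
  simp only [Smat, S'mat, Amat, Bmat]
  rw [Fin.sum_univ_eq_sum_range
      (fun t => sval k ((i:ℕ)+1) (t+1) * AbarN m a (t+1) ((j:ℕ)+1)) k,
    Fin.sum_univ_eq_sum_range
      (fun t => BbarN m a ((i:ℕ)+1) (t+1) * sval k (t+1) ((j:ℕ)+1)) k]
  have hA : ∀ t ∈ range k, sval k ((i:ℕ)+1) (t+1) * AbarN m a (t+1) ((j:ℕ)+1)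
      = sval k ((i:ℕ)+1) (t+1) * (fun T => AbarN m a T ((j:ℕ)+1)) (t+1) := fun t _ => rfl
  rw [sum_sval_mul k (fun T => AbarN m a T ((j:ℕ)+1)) ((i:ℕ)+1) (by omega) (by omega),
    sum_mul_sval k (fun T => BbarN m a ((i:ℕ)+1) T) ((j:ℕ)+1) (by omega) (by omega)]
  exact key1 m k a hs hmk ((i:ℕ)+1) ((j:ℕ)+1) (by omega) (by omega) (by omega) (by omega)

lemma detA_eq_detB (hmk : m = 2*k+1) :
    (Amat m k a : Matrix (Fin k) (Fin k) F).det = (Bmat m k a).det := by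
  have h1 : (Smat k : Matrix (Fin k) (Fin k) F).det * (S'mat k).det = 1 := by
    rw [← Matrix.det_mul, Smat_mul_S'mat, Matrix.det_one]
  have h2 : (Smat k : Matrix (Fin k) (Fin k) F).det * (Amat m k a).det
      = (Bmat m k a).det * (Smat k).det := by
    rw [← Matrix.det_mul, ← Matrix.det_mul, Smat_mul_Amat m k a hs hmk]
  linear_combination (S'mat k : Matrix (Fin k) (Fin k) F).det * h2
    - ((Amat m k a).det - (Bmat m k a).det) * h1


end Mats

section PQ
variable (m k : ℕ) (a : ZMod m → F) [NeZero m]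


def Pm : Matrix (ZMod m) (ZMod m) F := fun t j =>
  if j = 0 then 1 else if t = j then 1
    else if t = -j then (if j.val ≤ k then 1 else -1) else 0

def Qm : Matrix (ZMod m) (ZMod m) F := fun t j =>
  if t = 0 then (if j = 0 then 1 else 0)
  else if t.val ≤ k then (if j = 0 then -1 else if j = t ∨ j = -t then (2:F)⁻¹ else 0)
  else (if j = t then (2:F)⁻¹ else if j = -t then -(2:F)⁻¹ else 0)

lemma neg_ne_self (hmk : m = 2*k+1) {j : ZMod m} (hj : j ≠ 0) : j ≠ -j := by
  intro h
  have hv := ZMod.neg_val j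
  rw [if_neg hj] at hv
  have h1 : j.val < m := ZMod.val_lt j
  have h2 : j.val ≠ 0 := by rwa [Ne, ZMod.val_eq_zero]
  have h3 : j.val = m - j.val := by rw [← hv, ← h]
  omega

lemma neg_val_le (hmk : m = 2*k+1) {j : ZMod m} (hj : j ≠ 0) :
    ((-j).val ≤ k ↔ ¬ j.val ≤ k) := by
  have hv := ZMod.neg_val j
  rw [if_neg hj] at hv
  have h1 : j.val < m := ZMod.val_lt j
  have h2 : j.val ≠ 0 := by rwa [Ne, ZMod.val_eq_zero]
  omega

lemma half_half (h2 : (2:F) ≠ 0) : (2:F)⁻¹ + (2:F)⁻¹ = 1 := by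
  field_simp
  ring

lemma QP (hmk : m = 2*k+1) (h2 : (2:F) ≠ 0) : Qm m k * Pm m k = (1 : Matrix (ZMod m) (ZMod m) F) := by
  ext t j
  rw [Matrix.mul_apply, Matrix.one_apply]
  by_cases hj : j = 0
  · subst hj
    have hP : ∀ s : ZMod m, Pm m k (F := F) s 0 = 1 := fun s => by simp [Pm]
    simp only [hP, mul_one]
    by_cases ht : t = 0
    · subst ht
      rw [if_pos rfl]
      have : ∀ s : ZMod m, Qm m k (F := F) 0 s = if s = 0 then 1 else 0 := fun s => by
        simp [Qm]
      rw [Finset.sum_congr rfl (fun s _ => this s), Fintype.sum_ite_eq' (0 : ZMod m) (fun _ => (1:F))]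
    · rw [if_neg ht]
      have htn : t ≠ -t := neg_ne_self m k hmk ht
      have htn0 : -t ≠ 0 := by simpa using ht
      by_cases hpt : t.val ≤ k
      · have hq : ∀ s : ZMod m, Qm m k (F := F) t s
            = (if s = 0 then (-1:F) else 0) + ((if s = t then (2:F)⁻¹ else 0)
              + (if s = -t then (2:F)⁻¹ else 0)) := fun s => by
          simp only [Qm, if_neg ht, if_pos hpt]
          split_ifs <;> first | ring1 | simp_all
        rw [Finset.sum_congr rfl (fun s _ => hq s), Finset.sum_add_distrib,
          Finset.sum_add_distrib, Fintype.sum_ite_eq' (0 : ZMod m) (fun _ => (-1:F)),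
          Fintype.sum_ite_eq' t (fun _ => (2:F)⁻¹), Fintype.sum_ite_eq' (-t) (fun _ => (2:F)⁻¹)]
        linear_combination half_half h2
      · have hq : ∀ s : ZMod m, Qm m k (F := F) t s
            = (if s = t then (2:F)⁻¹ else 0) + (if s = -t then -(2:F)⁻¹ else 0) := fun s => by
          simp only [Qm, if_neg ht, if_neg hpt]
          split_ifs <;> first | ring1 | simp_all
        rw [Finset.sum_congr rfl (fun s _ => hq s), Finset.sum_add_distrib,
          Fintype.sum_ite_eq' t (fun _ => (2:F)⁻¹), Fintype.sum_ite_eq' (-t) (fun _ => -(2:F)⁻¹)]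
        ring
  · have hjn : j ≠ -j := neg_ne_self m k hmk hj
    have hjn0 : -j ≠ 0 := by simpa using hj
    set σ : F := (if j.val ≤ k then (1:F) else -1) with hσ
    have hsplit : ∀ s : ZMod m, Qm m k (F := F) t s * Pm m k s j
        = (if s = j then Qm m k (F := F) t j else 0)
          + (if s = -j then σ * Qm m k (F := F) t (-j) else 0) := fun s => by
      simp only [Pm, if_neg hj]
      split_ifs <;> first | ring1 | simp_all
    rw [Finset.sum_congr rfl (fun s _ => hsplit s), Finset.sum_add_distrib,
      Fintype.sum_ite_eq' j (fun _ => Qm m k (F := F) t j),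
      Fintype.sum_ite_eq' (-j) (fun _ => σ * Qm m k (F := F) t (-j))]
    by_cases ht : t = 0
    · subst ht
      have : Qm m k (F := F) 0 j = 0 := by simp [Qm, hj]
      have h2' : Qm m k (F := F) 0 (-j) = 0 := by simp [Qm, hjn0]
      rw [this, h2', if_neg (fun h => hj h.symm)]
      ring
    · have htn : t ≠ -t := neg_ne_self m k hmk ht
      have htn0 : -t ≠ 0 := by simpa using ht
      by_cases hjt : j = t
      · subst hjt
        rw [if_pos rfl]
        by_cases hpt : j.val ≤ k
        · have e1 : Qm m k (F := F) j j = (2:F)⁻¹ := by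
            simp [Qm, ht, hpt]
          have e2 : Qm m k (F := F) j (-j) = (2:F)⁻¹ := by
            simp [Qm, ht, hpt, hjn0]
          rw [e1, e2, hσ, if_pos hpt]
          linear_combination half_half h2
        · have e1 : Qm m k (F := F) j j = (2:F)⁻¹ := by
            simp [Qm, ht, hpt]
          have e2 : Qm m k (F := F) j (-j) = -(2:F)⁻¹ := by
            simp [Qm, ht, hpt, Ne.symm hjn]
          rw [e1, e2, hσ, if_neg hpt]
          linear_combination half_half h2
      · by_cases hjnt : j = -t
        · rw [if_neg (fun h => hjt h.symm)]
          subst hjnt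
          have hnj : -(-t) = t := neg_neg t
          by_cases hpt : t.val ≤ k
          · have hpj : ¬ (-t).val ≤ k := by
              rw [neg_val_le m k hmk ht]; simpa using hpt
            have e1 : Qm m k (F := F) t (-t) = (2:F)⁻¹ := by
              simp [Qm, ht, hpt]
            have e2 : Qm m k (F := F) t (-(-t)) = (2:F)⁻¹ := by
              rw [hnj]; simp [Qm, ht, hpt]
            rw [e1, e2, hσ, if_neg hpj]
            ring
          · have hpj : (-t).val ≤ k := by
              rw [neg_val_le m k hmk ht]; simpa using hpt
            have e1 : Qm m k (F := F) t (-t) = -(2:F)⁻¹ := by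
              simp [Qm, ht, hpt, Ne.symm htn]
            have e2 : Qm m k (F := F) t (-(-t)) = (2:F)⁻¹ := by
              rw [hnj]; simp [Qm, ht, hpt]
            rw [e1, e2, hσ, if_pos hpj]
            ring
        · have hnjt : -j ≠ t := fun h => hjnt (by rw [← h, neg_neg])
          have hnjnt : -j ≠ -t := fun h => hjt (neg_injective h)
          have e1 : Qm m k (F := F) t j = 0 := by
            simp [Qm, ht, hj, hjt, hjnt]
          have e2 : Qm m k (F := F) t (-j) = 0 := by
            simp [Qm, ht, hjn0, hnjt, hnjnt]
          rw [e1, e2, if_neg (fun h => hjt h.symm)]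
          ring



def Dm : Matrix (ZMod m) (ZMod m) F := fun t j =>
  if j = 0 then (if t = 0 then (∑ i : ZMod m, a i) else 0)
  else if j.val ≤ k then
    (if t = 0 then 2 * a j
      else if t.val ≤ k then a (t - j) + a (t + j) - 2 * a j else 0)
  else (if t.val ≤ k then 0 else a (t - j) - a (t + j))

def lab : ZMod m → ℕ := fun j => if j = 0 then 0 else if j.val ≤ k then 1 else 2

variable (hs : ∀ i : ZMod m, a (-i) = a i)

include hs

lemma CP_eq_PD (hmk : m = 2*k+1) :
    (circulant a) * Pm m k = Pm m k * Dm m k a := by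
  ext i j
  rw [Matrix.mul_apply, Matrix.mul_apply]
  by_cases hj : j = 0
  · subst hj
    have hL : ∀ s : ZMod m, circulant a i s * Pm m k (F := F) s 0 = a (i - s) := fun s => by
      simp [Pm, circulant_apply]
    have hR : ∀ t : ZMod m, Pm m k (F := F) i t * Dm m k a t 0
        = (if t = 0 then (∑ x : ZMod m, a x) else 0) := fun t => by
      by_cases ht : t = 0
      · subst ht; simp [Pm, Dm]
      · simp [Dm, ht]
    rw [Finset.sum_congr rfl (fun s _ => hL s), Finset.sum_congr rfl (fun t _ => hR t),
      Fintype.sum_ite_eq' (0 : ZMod m) (fun _ => ∑ x : ZMod m, a x)]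
    exact Fintype.sum_equiv (Equiv.subLeft i) _ _ (fun s => rfl)
  · have hjn : j ≠ -j := neg_ne_self m k hmk hj
    have hjn0 : -j ≠ 0 := by simpa using hj
    set σ : F := (if j.val ≤ k then (1:F) else -1) with hσ
    have hL : ∀ s : ZMod m, circulant a i s * Pm m k (F := F) s j
        = (if s = j then a (i - j) else 0) + (if s = -j then σ * a (i + j) else 0) := fun s => by
      simp only [Pm, circulant_apply, if_neg hj]
      split_ifs <;> first | ring1 | simp_all | (rw [sub_neg_eq_add]; ring1)
    rw [Finset.sum_congr rfl (fun s _ => hL s), Finset.sum_add_distrib,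
      Fintype.sum_ite_eq' j (fun _ => a (i - j)),
      Fintype.sum_ite_eq' (-j) (fun _ => σ * a (i + j))]
    have hD0 : Dm m k (F := F) a 0 j = (if j.val ≤ k then 2 * a j else 0) := by
      by_cases hpj : j.val ≤ k <;> simp [Dm, hj, hpj]
    by_cases hi : i = 0
    · subst hi
      have hR : ∀ t : ZMod m, Pm m k (F := F) 0 t * Dm m k a t j
          = (if t = 0 then Dm m k a 0 j else 0) := fun t => by
        by_cases ht : t = 0
        · subst ht; simp [Pm]
        · have h0t : (0 : ZMod m) ≠ -t := by simpa [eq_comm] using (by simpa using ht : -t ≠ 0)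
          simp [Pm, ht, Ne.symm ht, h0t]
      rw [Finset.sum_congr rfl (fun t _ => hR t),
        Fintype.sum_ite_eq' (0 : ZMod m) (fun _ => Dm m k a 0 j), hD0, zero_sub, zero_add, hs j]
      by_cases hpj : j.val ≤ k
      · rw [hσ, if_pos hpj, if_pos hpj]; ring
      · rw [hσ, if_neg hpj, if_neg hpj]; ring
    · have hin : i ≠ -i := neg_ne_self m k hmk hi
      have hin0 : -i ≠ 0 := by simpa using hi
      set τ : F := (if (-i).val ≤ k then (1:F) else -1) with hτ
      have hR : ∀ t : ZMod m, Pm m k (F := F) i t * Dm m k a t j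
          = (if t = 0 then Dm m k a 0 j else 0) + ((if t = i then Dm m k a i j else 0)
            + (if t = -i then τ * Dm m k a (-i) j else 0)) := fun t => by
        by_cases ht : t = 0
        · subst ht
          rw [if_pos rfl, if_neg (Ne.symm hi), if_neg (Ne.symm hin0)]
          simp [Pm]
        · by_cases h1 : t = i
          · have hP : Pm m k (F := F) i t = 1 := by simp [Pm, ht, h1.symm]
            rw [hP, if_neg ht, if_pos h1, if_neg (show ¬ t = -i from fun h => hin (h1.symm.trans h)), one_mul,
              add_zero, zero_add, h1]
          · by_cases h2 : t = -i
            · subst h2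
              have hP : Pm m k (F := F) i (-i) = τ := by
                rw [hτ]
                simp [Pm, hin0, if_neg hin, neg_neg]
              rw [hP, if_neg ht, if_neg (fun h : -i = i => hin h.symm), if_pos rfl]
              ring
            · have hP : Pm m k (F := F) i t = 0 := by
                have hi1 : i ≠ t := fun h => h1 h.symm
                have hi2 : i ≠ -t := fun h => h2 (by rw [h, neg_neg])
                simp [Pm, ht, hi1, hi2]
              rw [hP, if_neg ht, if_neg h1, if_neg h2]
              ring
      rw [Finset.sum_congr rfl (fun t _ => hR t), Finset.sum_add_distrib, Finset.sum_add_distrib,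
        Fintype.sum_ite_eq' (0 : ZMod m) (fun _ => Dm m k a 0 j),
        Fintype.sum_ite_eq' i (fun _ => Dm m k a i j),
        Fintype.sum_ite_eq' (-i) (fun _ => τ * Dm m k a (-i) j), hD0]
      have hnegi : ∀ x : ZMod m, a (-i - x) = a (i + x) := fun x => by
        rw [show -i - x = -(i + x) by ring, hs]
      have hnegi' : ∀ x : ZMod m, a (-i + x) = a (i - x) := fun x => by
        rw [show -i + x = -(i - x) by ring, hs]
      by_cases hpj : j.val ≤ k <;> by_cases hpi : i.val ≤ k
      · have hpni : ¬ (-i).val ≤ k := by rw [neg_val_le m k hmk hi]; simpa using hpi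
        have hDi : Dm m k (F := F) a i j = a (i - j) + a (i + j) - 2 * a j := by
          simp [Dm, hj, hpj, hi, hpi]
        have hDni : Dm m k (F := F) a (-i) j = 0 := by
          simp [Dm, hj, hpj, hin0, hpni]
        rw [hDi, hDni, hσ, if_pos hpj, if_pos hpj]
        ring
      · have hpni : (-i).val ≤ k := by rw [neg_val_le m k hmk hi]; simpa using hpi
        have hDi : Dm m k (F := F) a i j = 0 := by
          simp [Dm, hj, hpj, hi, hpi]
        have hDni : Dm m k (F := F) a (-i) j
            = a (i + j) + a (i - j) - 2 * a j := by
          simp only [Dm, if_neg hj, if_pos hpj, if_neg hin0, if_pos hpni, hnegi, hnegi']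
        rw [hDi, hDni, hσ, hτ, if_pos hpj, if_pos hpj, if_pos hpni]
        ring
      · have hpni : ¬ (-i).val ≤ k := by rw [neg_val_le m k hmk hi]; simpa using hpi
        have hDi : Dm m k (F := F) a i j = 0 := by
          simp [Dm, hj, hpj, hi, hpi]
        have hDni : Dm m k (F := F) a (-i) j = a (i + j) - a (i - j) := by
          simp only [Dm, if_neg hj, if_neg hpj, if_neg hpni, if_neg (show ¬ (-i).val ≤ k from hpni), hnegi, hnegi']
        rw [hDi, hDni, hσ, hτ, if_neg hpj, if_neg hpj, if_neg hpni]
        ring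
      · have hpni : (-i).val ≤ k := by rw [neg_val_le m k hmk hi]; simpa using hpi
        have hDi : Dm m k (F := F) a i j = a (i - j) - a (i + j) := by
          simp [Dm, hj, hpj, hi, hpi]
        have hDni : Dm m k (F := F) a (-i) j = 0 := by
          simp [Dm, hj, hpj, hin0, hpni]
        rw [hDi, hDni, hσ, if_neg hpj, if_neg hpj]
        ring




omit hs

lemma lab_eq_zero {x : ZMod m} : lab m k x = 0 ↔ x = 0 := by
  unfold lab; split_ifs <;> simp_all

lemma lab_eq_one {x : ZMod m} : lab m k x = 1 ↔ (x ≠ 0 ∧ x.val ≤ k) := by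
  unfold lab; split_ifs <;> simp_all

lemma lab_eq_two {x : ZMod m} : lab m k x = 2 ↔ ¬ x.val ≤ k := by
  unfold lab; split_ifs with h1 h2 <;> simp_all

lemma Dm_blockTriangular : (Dm m k a).BlockTriangular (lab m k) := by
  intro t j hlt
  by_cases hj : j = 0 <;> by_cases ht : t = 0 <;> by_cases hpj : j.val ≤ k <;>
    by_cases hpt : t.val ≤ k <;> simp_all [Dm, lab]

lemma val_cast_lt (n : ℕ) (h : n < m) : ((n : ZMod m)).val = n := by
  rw [ZMod.val_natCast, Nat.mod_eq_of_lt h]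

def e1 (hmk : m = 2*k+1) : Fin k ≃ {x : ZMod m // lab m k x = 1} where
  toFun i := ⟨(((i:ℕ)+1 : ℕ) : ZMod m), by
    have hlt : (i:ℕ)+1 < m := by have := i.isLt; omega
    have hv : (((i:ℕ)+1 : ℕ) : ZMod m).val = (i:ℕ)+1 := val_cast_lt m _ hlt
    rw [lab_eq_one]
    constructor
    · rw [Ne, ← ZMod.val_eq_zero, hv]; omega
    · rw [hv]; have := i.isLt; omega⟩
  invFun x := ⟨x.1.val - 1, by
    have hx := (lab_eq_one m k).mp x.2
    have h0 : x.1.val ≠ 0 := by rw [Ne, ZMod.val_eq_zero]; exact hx.1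
    have := hx.2
    omega⟩
  left_inv i := by
    have hlt : (i:ℕ)+1 < m := by have := i.isLt; omega
    apply Fin.ext
    show ((((i:ℕ)+1 : ℕ) : ZMod m)).val - 1 = (i:ℕ)
    rw [val_cast_lt m _ hlt]
    omega
  right_inv x := by
    apply Subtype.ext
    have hx := (lab_eq_one m k).mp x.2
    have h0 : x.1.val ≠ 0 := by rw [Ne, ZMod.val_eq_zero]; exact hx.1
    show (((x.1.val - 1) + 1 : ℕ) : ZMod m) = x.1
    rw [Nat.sub_add_cancel (by omega)]
    exact ZMod.natCast_rightInverse x.1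

def e2 (hmk : m = 2*k+1) : Fin k ≃ {x : ZMod m // lab m k x = 2} where
  toFun i := ⟨-(((i:ℕ)+1 : ℕ) : ZMod m), by
    have hlt : (i:ℕ)+1 < m := by have := i.isLt; omega
    have hv : (((i:ℕ)+1 : ℕ) : ZMod m).val = (i:ℕ)+1 := val_cast_lt m _ hlt
    have h0 : (((i:ℕ)+1 : ℕ) : ZMod m) ≠ 0 := by
      rw [Ne, ← ZMod.val_eq_zero, hv]; omega
    rw [lab_eq_two, ZMod.neg_val, if_neg h0, hv]
    have := i.isLt
    omega⟩
  invFun x := ⟨m - 1 - x.1.val, by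
    have hx := (lab_eq_two m k).mp x.2
    have := ZMod.val_lt x.1
    omega⟩
  left_inv i := by
    have hlt : (i:ℕ)+1 < m := by have := i.isLt; omega
    have hv : (((i:ℕ)+1 : ℕ) : ZMod m).val = (i:ℕ)+1 := val_cast_lt m _ hlt
    have h0 : (((i:ℕ)+1 : ℕ) : ZMod m) ≠ 0 := by
      rw [Ne, ← ZMod.val_eq_zero, hv]; omega
    apply Fin.ext
    show m - 1 - (-(((i:ℕ)+1 : ℕ) : ZMod m)).val = (i:ℕ)
    rw [ZMod.neg_val, if_neg h0, hv]
    have := i.isLt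
    omega
  right_inv x := by
    apply Subtype.ext
    have hx := (lab_eq_two m k).mp x.2
    have hlt := ZMod.val_lt x.1
    show -(((m - 1 - x.1.val + 1 : ℕ)) : ZMod m) = x.1
    rw [show m - 1 - x.1.val + 1 = m - x.1.val by omega,
      Nat.cast_sub (le_of_lt hlt), ZMod.natCast_self, zero_sub, neg_neg]
    exact ZMod.natCast_rightInverse x.1



lemma e1_coe (hmk : m = 2*k+1) (i : Fin k) :
    ((e1 m k hmk i : {x : ZMod m // lab m k x = 1}) : ZMod m) = (((i:ℕ)+1 : ℕ) : ZMod m) := rfl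
lemma e2_coe (hmk : m = 2*k+1) (i : Fin k) :
    ((e2 m k hmk i : {x : ZMod m // lab m k x = 2}) : ZMod m) = -(((i:ℕ)+1 : ℕ) : ZMod m) := rfl

lemma det_block0 : ((Dm m k a).toSquareBlock (lab m k) 0).det = ∑ i : ZMod m, a i := by
  letI : Unique {x : ZMod m // lab m k x = 0} :=
    ⟨⟨⟨0, by simp [lab]⟩⟩, fun x => Subtype.ext (by simpa [lab_eq_zero] using x.2)⟩
  rw [Matrix.det_unique]
  have hd : ((default : {x : ZMod m // lab m k x = 0}) : ZMod m) = 0 := rfl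
  show Dm m k a _ _ = _
  simp [Dm, hd]

lemma det_block1 (hmk : m = 2*k+1) :
    ((Dm m k a).toSquareBlock (lab m k) 1).det = (Amat m k a).det := by
  rw [← Matrix.det_submatrix_equiv_self (e1 m k hmk)]
  congr 1
  ext i j
  have hi := (lab_eq_one m k).mp (e1 m k hmk i).2
  have hj := (lab_eq_one m k).mp (e1 m k hmk j).2
  show Dm m k a ((e1 m k hmk i) : ZMod m) ((e1 m k hmk j) : ZMod m) = Amat m k a i j
  unfold Dm
  rw [if_neg hj.1, if_pos hj.2, if_neg hi.1, if_pos hi.2, e1_coe m k hmk, e1_coe m k hmk]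
  rfl

lemma det_block2 (hmk : m = 2*k+1) (hs : ∀ i : ZMod m, a (-i) = a i) :
    ((Dm m k a).toSquareBlock (lab m k) 2).det = (Bmat m k a).det := by
  rw [← Matrix.det_submatrix_equiv_self (e2 m k hmk)]
  congr 1
  ext i j
  have hi := (lab_eq_two m k).mp (e2 m k hmk i).2
  have hj := (lab_eq_two m k).mp (e2 m k hmk j).2
  show Dm m k a ((e2 m k hmk i) : ZMod m) ((e2 m k hmk j) : ZMod m) = Bmat m k a i j
  have hj0 : ((e2 m k hmk j) : ZMod m) ≠ 0 := by
    intro h; apply hj; rw [h]; simp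
  unfold Dm
  rw [if_neg hj0, if_neg hj, if_neg hi, e2_coe m k hmk, e2_coe m k hmk]
  rw [show -(((i:ℕ)+1 : ℕ) : ZMod m) - -(((j:ℕ)+1 : ℕ) : ZMod m)
      = -(((((i:ℕ)+1 : ℕ)) : ZMod m) - (((j:ℕ)+1 : ℕ) : ZMod m)) by ring, hs,
    show -(((i:ℕ)+1 : ℕ) : ZMod m) + -(((j:ℕ)+1 : ℕ) : ZMod m)
      = -(((((i:ℕ)+1 : ℕ)) : ZMod m) + (((j:ℕ)+1 : ℕ) : ZMod m)) by ring, hs]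
  rfl

lemma lab_image (hmk : m = 2*k+1) (hk : 1 ≤ k) :
    Finset.image (lab m k) univ = {0, 1, 2} := by
  apply Finset.ext; intro x
  simp only [Finset.mem_image, Finset.mem_insert, Finset.mem_singleton]
  constructor
  · rintro ⟨j, -, rfl⟩
    unfold lab; split_ifs <;> simp
  · rintro (rfl | rfl | rfl)
    · exact ⟨0, mem_univ _, by simp [lab]⟩
    · exact ⟨(e1 m k hmk ⟨0, hk⟩ : {x : ZMod m // lab m k x = 1}), mem_univ _,
        (e1 m k hmk ⟨0, hk⟩).2⟩
    · exact ⟨(e2 m k hmk ⟨0, hk⟩ : {x : ZMod m // lab m k x = 2}), mem_univ _,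
        (e2 m k hmk ⟨0, hk⟩).2⟩

lemma detDm (hmk : m = 2*k+1) (hk : 1 ≤ k) (hs : ∀ i : ZMod m, a (-i) = a i) :
    (Dm m k a).det = (∑ i : ZMod m, a i) * ((Amat m k a).det * (Bmat m k a).det) := by
  rw [(Dm_blockTriangular m k a).det, lab_image m k hmk hk]
  rw [show ({0,1,2} : Finset ℕ) = insert 0 (insert 1 ({2} : Finset ℕ)) from rfl,
    Finset.prod_insert (by decide), Finset.prod_insert (by decide), Finset.prod_singleton,
    det_block0, det_block1 m k a hmk, det_block2 m k a hmk hs]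

lemma field_main (hmk : m = 2*k+1) (hk : 1 ≤ k) (h2 : (2:F) ≠ 0)
    (hs : ∀ i : ZMod m, a (-i) = a i) :
    (circulant a).det = (∑ i : ZMod m, a i) * (Bmat m k a).det ^ 2 := by
  have hdet1 : (Qm m k (F:=F)).det * (Pm m k (F:=F)).det = 1 := by
    rw [← Matrix.det_mul, QP m k hmk h2, Matrix.det_one]
  have hdet2 : (circulant a).det * (Pm m k (F:=F)).det
      = (Pm m k (F:=F)).det * (Dm m k a).det := by
    rw [← Matrix.det_mul, ← Matrix.det_mul, CP_eq_PD m k a hs hmk]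
  have hD : (circulant a).det = (Dm m k a).det := by
    linear_combination (Qm m k (F:=F)).det * hdet2
      - ((circulant a).det - (Dm m k a).det) * hdet1
  rw [hD, detDm m k a hmk hk hs, detA_eq_detB m k a hs hmk]
  ring

end PQ
end CircOdd

theorem circulant_det_odd {R : Type*} [CommRing R] (m : ℕ) [NeZero m] (hm : Odd m)
    (a : ZMod m → R) (hsym : ∀ i : ZMod m, a (-i) = a i) :
    ∃ v : R, (Matrix.circulant a).det = (∑ i ∈ Finset.range m, a i) * v ^ 2 := by
  classical
  obtain ⟨k, hmk⟩ : ∃ k, m = 2*k+1 := by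
    obtain ⟨t, ht⟩ := hm; exact ⟨t, by omega⟩
  by_cases hk0 : k = 0
  · refine ⟨1, ?_⟩
    have hm1 : m = 1 := by omega
    subst hm1
    rw [Matrix.det_unique, Finset.sum_range_one]
    have h0 : ((default : ZMod 1) - default) = ((0 : ℕ) : ZMod 1) := Subsingleton.elim _ _
    rw [Matrix.circulant_apply, one_pow, mul_one]; exact congrArg a (Subsingleton.elim _ _)
  · have hk1 : 1 ≤ k := by omega
    have hfold : ∀ i : ZMod m, (if (-i).val ≤ k then -i else -(-i))
        = (if i.val ≤ k then i else -i) := by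
      intro i
      by_cases hi : i = 0
      · subst hi; simp
      · by_cases hp : i.val ≤ k
        · have hnp : ¬ (-i).val ≤ k := by
            rw [CircOdd.neg_val_le m k hmk hi]; simpa using hp
          rw [if_neg hnp, if_pos hp, neg_neg]
        · have hnp : (-i).val ≤ k := by
            rw [CircOdd.neg_val_le m k hmk hi]; simpa using hp
          rw [if_pos hnp, if_neg hp]
    set α : ZMod m → MvPolynomial (ZMod m) ℤ :=
      fun i => MvPolynomial.X (if i.val ≤ k then i else -i) with hα
    have hαs : ∀ i : ZMod m, α (-i) = α i := fun i => by
      rw [hα]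
      exact congrArg MvPolynomial.X (hfold i)
    have hψ : Function.Injective
        (algebraMap (MvPolynomial (ZMod m) ℤ) (FractionRing (MvPolynomial (ZMod m) ℤ))) :=
      IsFractionRing.injective _ _
    set ψ := (algebraMap (MvPolynomial (ZMod m) ℤ) (FractionRing (MvPolynomial (ZMod m) ℤ)))
      with hψdef
    set b : ZMod m → FractionRing (MvPolynomial (ZMod m) ℤ) := fun i => ψ (α i) with hb
    have hbs : ∀ i : ZMod m, b (-i) = b i := fun i => by rw [hb]; simp only [hαs]
    have h2 : (2 : FractionRing (MvPolynomial (ZMod m) ℤ)) ≠ 0 := two_ne_zero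
    have key := CircOdd.field_main m k b hmk hk1 h2 hbs
    have hcirc : Matrix.circulant b = ψ.mapMatrix (Matrix.circulant α) := by
      ext i j; simp [Matrix.circulant_apply, hb]
    have hBmat : CircOdd.Bmat m k b = ψ.mapMatrix (CircOdd.Bmat m k α) := by
      ext i j
      simp [CircOdd.Bmat, CircOdd.BbarN, hb, map_sub]
    have hsum : (∑ i : ZMod m, b i) = ψ (∑ i : ZMod m, α i) := by
      rw [map_sum]
    rw [hcirc, hBmat, hsum, ← RingHom.map_det, ← RingHom.map_det] at key
    have keyS : (Matrix.circulant α).det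
        = (∑ i : ZMod m, α i) * (CircOdd.Bmat m k α).det ^ 2 := by
      apply hψ
      rw [_root_.map_mul, map_pow]
      exact key
    set φ : MvPolynomial (ZMod m) ℤ →+* R :=
      MvPolynomial.eval₂Hom (Int.castRingHom R) (fun i : ZMod m => a i) with hφdef
    have hφα : ∀ i : ZMod m, φ (α i) = a i := fun i => by
      rw [hα]
      simp only [hφdef, MvPolynomial.eval₂Hom_X']
      by_cases hp : i.val ≤ k
      · rw [if_pos hp]
      · rw [if_neg hp, hsym]
    refine ⟨φ ((CircOdd.Bmat m k α).det), ?_⟩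
    have hmain := congrArg φ keyS
    rw [_root_.map_mul, map_pow] at hmain
    have hL : φ ((Matrix.circulant α).det) = (Matrix.circulant a).det := by
      rw [RingHom.map_det]
      congr 1
      ext i j
      simp [Matrix.circulant_apply, hφα]
    have hsum2 : φ (∑ i : ZMod m, α i) = ∑ i ∈ Finset.range m, a i := by
      rw [map_sum]
      simp only [hφα]
      apply Finset.sum_nbij' (fun (x : ZMod m) => x.val) (fun n => (n : ZMod m))
      · intro x _; exact Finset.mem_range.mpr (ZMod.val_lt x)
      · intro n _; exact Finset.mem_univ _
      · intro x _; exact ZMod.natCast_rightInverse x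
      · intro n hn; exact (ZMod.val_natCast (n := m) n).trans (Nat.mod_eq_of_lt (Finset.mem_range.mp hn))
      · intro x _; rw [ZMod.natCast_rightInverse x]
    rw [hL, hsum2] at hmain
    exact hmain
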